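/- Let k ≥ 2 be an integer and let T = (V,E) be a finite tree with |V| ≥ k. Then there exists a connected generalized k-community structure of T. -/

import Mathlib

/-- The set of neighbours of `v` lying in `C`. -/
def nbrsIn {V : Type*} [DecidableEq V] (G : SimpleGraph V) [DecidableRel G.Adj]
    (C : Finset V) (v : V) : Finset V :=
  C.filter (fun w => G.Adj v w)

/-- A generalized `k`-community structure of `G`. -/
def IsGenKComm {V : Type*} [Fintype V] [DecidableEq V] (G : SimpleGraph V) [DecidableRel G.Adj]
    {k : ℕ} (C : Fin k → Finset V) : Prop :=
  (∀ i, (C i).Nonempty) ∧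
  (∀ i j, i ≠ j → Disjoint (C i) (C j)) ∧
  (∀ v : V, ∃ i, v ∈ C i) ∧
  (∀ i j, i ≠ j → ∀ v ∈ C i,
    (nbrsIn G (C j) v).card * ((C i).card - 1) ≤ (nbrsIn G (C i) v).card * (C j).card)


open Finset


set_option linter.unusedSectionVars false

namespace CommAux

variable {V : Type*} [Fintype V] [DecidableEq V] {G : SimpleGraph V} [DecidableRel G.Adj]

/-- adjacency within a finset -/
def Rel (G : SimpleGraph V) (S : Finset V) (a b : V) : Prop := a ∈ S ∧ b ∈ S ∧ G.Adj a b

/-- reachability within a finset -/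
def RT (G : SimpleGraph V) (S : Finset V) : V → V → Prop := Relation.ReflTransGen (Rel G S)

/-- the set induces a connected graph, phrased via `RT` -/
def ConnAll (G : SimpleGraph V) [DecidableRel G.Adj] (S : Finset V) : Prop :=
  ∀ x ∈ S, ∀ y ∈ S, RT G S x y

lemma RT.refl {S : Finset V} {x : V} : RT G S x x := Relation.ReflTransGen.refl

lemma RT.mono {S T : Finset V} (hST : S ⊆ T) {x y : V} (h : RT G S x y) : RT G T x y := by
  induction h with
  | refl => exact Relation.ReflTransGen.refl
  | tail _ hbc ih => exact ih.tail ⟨hST hbc.1, hST hbc.2.1, hbc.2.2⟩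

lemma RT.symm {S : Finset V} {x y : V} (h : RT G S x y) : RT G S y x := by
  induction h with
  | refl => exact Relation.ReflTransGen.refl
  | tail _ hbc ih =>
      exact Relation.ReflTransGen.trans
        (Relation.ReflTransGen.single ⟨hbc.2.1, hbc.1, hbc.2.2.symm⟩) ih

lemma RT.trans {S : Finset V} {x y z : V} (h : RT G S x y) (h' : RT G S y z) : RT G S x z :=
  Relation.ReflTransGen.trans h h'

/-- reachable set within `S` from `x` -/
noncomputable def reachSet (G : SimpleGraph V) [DecidableRel G.Adj] (S : Finset V) (x : V) :
    Finset V :=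
  @Finset.filter _ (fun z => RT G S x z) (Classical.decPred _) S

lemma mem_reachSet {S : Finset V} {x z : V} : z ∈ reachSet G S x ↔ z ∈ S ∧ RT G S x z := by
  unfold reachSet; exact @Finset.mem_filter _ _ (Classical.decPred _) _ _

lemma reachSet_subset {S : Finset V} {x : V} : reachSet G S x ⊆ S := by
  intro z hz; exact (mem_reachSet.1 hz).1

lemma rt_reachSet {S : Finset V} {x y : V} (h : RT G S x y) : RT G (reachSet G S x) x y := by
  induction h with
  | refl => exact RT.refl
  | @tail b c hab hbc ih =>
      exact ih.tail ⟨mem_reachSet.2 ⟨hbc.1, hab⟩,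
        mem_reachSet.2 ⟨hbc.2.1, hab.tail hbc⟩, hbc.2.2⟩

lemma cross {S : Finset V} {a b x : V} (h : RT G S a b) (hax : a ≠ x)
    (hnb : ¬ RT G (S.erase x) a b) :
    ∃ w, w ∈ S.erase x ∧ G.Adj w x ∧ RT G (S.erase x) a w := by
  revert hax hnb
  induction h using Relation.ReflTransGen.head_induction_on with
  | refl => intro _ hnb; exact absurd Relation.ReflTransGen.refl hnb
  | head h' hcb ih =>
      rename_i a' c
      intro hax hnb
      obtain ⟨haS, hcS, hadj⟩ := h'
      by_cases hcx : c = x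
      · subst hcx
        exact ⟨a', Finset.mem_erase.2 ⟨hax, haS⟩, hadj, Relation.ReflTransGen.refl⟩
      · by_cases hrc : RT G (S.erase x) c b
        · exact absurd (hrc.head ⟨Finset.mem_erase.2 ⟨hax, haS⟩,
            Finset.mem_erase.2 ⟨hcx, hcS⟩, hadj⟩) hnb
        · obtain ⟨w, hw, hwx, hrt⟩ := ih hcx hrc
          exact ⟨w, hw, hwx, hrt.head ⟨Finset.mem_erase.2 ⟨hax, haS⟩,
            Finset.mem_erase.2 ⟨hcx, hcS⟩, hadj⟩⟩

lemma rt_last {S : Finset V} {y u : V} (h : RT G S y u) (hu : u ∉ S) : y = u := by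
  rcases h.cases_tail with h' | ⟨c, _, hc⟩
  · exact h'.symm
  · exact absurd hc.2.1 hu

lemma firstHit {S : Finset V} {y u : V} (h : RT G S y u) (hyu : y ≠ u) :
    ∃ w, w ∈ S.erase u ∧ G.Adj w u ∧ RT G (S.erase u) y w :=
  cross h hyu (fun hr => hyu (rt_last hr (Finset.notMem_erase u S)))

lemma walk_rt {x y : V} (p : G.Walk x y) : RT G Finset.univ x y := by
  induction p with
  | nil => exact RT.refl
  | cons h _ ih =>
      exact Relation.ReflTransGen.head ⟨Finset.mem_univ _, Finset.mem_univ _, h⟩ ih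

lemma rt_walk {S : Finset V} {x y : V} (h : RT G S x y) (hx : x ∈ S) :
    ∃ p : G.Walk x y, ∀ z ∈ p.support, z ∈ S := by
  induction h with
  | refl => exact ⟨SimpleGraph.Walk.nil, by simp [hx]⟩
  | @tail b c hab hbc ih =>
      obtain ⟨p, hp⟩ := ih
      refine ⟨p.append (SimpleGraph.Walk.cons hbc.2.2 SimpleGraph.Walk.nil), ?_⟩
      intro z hz
      rw [SimpleGraph.Walk.mem_support_append_iff] at hz
      rcases hz with hz | hz
      · exact hp z hz
      · simp only [SimpleGraph.Walk.support_cons, SimpleGraph.Walk.support_nil,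
          List.mem_cons, List.mem_singleton] at hz
        rcases hz with rfl | hz
        · exact hbc.1
        · rcases hz with rfl | h'
          · exact hbc.2.1
          · exact absurd h' List.not_mem_nil


lemma connAll_union {S T : Finset V} {a b : V} (hS : ConnAll G S) (hT : ConnAll G T)
    (ha : a ∈ S) (hb : b ∈ T) (hab : G.Adj a b) : ConnAll G (S ∪ T) := by
  have key : ∀ x ∈ S ∪ T, RT G (S ∪ T) x a := by
    intro x hx
    rcases Finset.mem_union.1 hx with h | h
    · exact RT.mono Finset.subset_union_left (hS x h a ha)
    · exact (RT.mono Finset.subset_union_right (hT x h b hb)).tail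
        ⟨Finset.mem_union_right _ hb, Finset.mem_union_left _ ha, hab.symm⟩
  intro x hx y hy
  exact (key x hx).trans (key y hy).symm

lemma connAll_singleton (x : V) : ConnAll G ({x} : Finset V) := by
  intro a ha b hb
  rw [Finset.mem_singleton] at ha hb
  subst ha; subst hb; exact RT.refl

/-- A vertex outside a connected set of a tree has at most one neighbour inside it. -/
lemma nbrs_le_one (htree : G.IsTree) {S : Finset V} {u : V} (hu : u ∉ S)
    (hconn : ConnAll G S) : (nbrsIn G S u).card ≤ 1 := by
  rw [Finset.card_le_one]
  intro a ha b hb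
  rw [nbrsIn, Finset.mem_filter] at ha hb
  by_contra hab
  obtain ⟨p, hp⟩ := rt_walk (hconn a ha.1 b hb.1) ha.1
  have hau : a ≠ u := fun h => hu (h ▸ ha.1)
  have hbu : b ≠ u := fun h => hu (h ▸ hb.1)
  have hq : (SimpleGraph.Walk.cons ha.2.symm
      (SimpleGraph.Walk.cons hb.2 SimpleGraph.Walk.nil) : G.Walk a b).IsPath := by
    simp [SimpleGraph.Walk.isPath_def, hau, hab, hbu.symm]
  have huniq := SimpleGraph.isAcyclic_iff_path_unique.mp htree.IsAcyclic
    p.toPath ⟨_, hq⟩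
  have hmem : u ∈ (p.toPath : G.Walk a b).support := by
    rw [huniq]; simp
  exact hu (hp u (SimpleGraph.Walk.support_toPath_subset p hmem))

/-- from RT-connectivity to connectivity of the induced graph -/
lemma conn_of {S : Finset V} (hne : S.Nonempty) (hconn : ConnAll G S) :
    (G.induce (↑S : Set V)).Connected := by
  have haux : ∀ x y : V, RT G S x y → ∀ (hx : x ∈ (↑S : Set V)) (hy : y ∈ (↑S : Set V)),
      (G.induce (↑S : Set V)).Reachable ⟨x, hx⟩ ⟨y, hy⟩ := by
    intro x y h
    induction h with
    | refl =>
        intro hx hy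
        have h0 : (⟨x, hx⟩ : (↑S : Set V)) = ⟨x, hy⟩ := rfl
        rw [h0]
    | @tail b c hab hbc ih =>
        intro hx hy
        have hb : b ∈ (↑S : Set V) := Finset.mem_coe.2 hbc.1
        refine (ih hx hb).trans (SimpleGraph.Adj.reachable ?_)
        exact hbc.2.2
  rw [SimpleGraph.connected_iff]
  obtain ⟨a, haS⟩ := hne
  refine ⟨fun x y => ?_, ⟨⟨a, Finset.mem_coe.2 haS⟩⟩⟩
  obtain ⟨x, hx⟩ := x
  obtain ⟨y, hy⟩ := y
  exact haux x y (hconn x (Finset.mem_coe.1 hx) y (Finset.mem_coe.1 hy)) hx hy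

/-- every connected set with at least 2 elements has a removable vertex -/
lemma split {S : Finset V} (hconn : ConnAll G S) (h2 : 2 ≤ S.card) :
    ∃ x ∈ S, ConnAll G (S.erase x) := by
  obtain ⟨r, hr⟩ : S.Nonempty := Finset.card_pos.1 (by omega)
  have hSr : (S.erase r).Nonempty := by
    rw [← Finset.card_pos, Finset.card_erase_of_mem hr]; omega
  obtain ⟨x, hx, hmax⟩ := Finset.exists_max_image (S.erase r)
    (fun x => (reachSet G (S.erase x) r).card) hSr
  have hxr : x ≠ r := Finset.ne_of_mem_erase hx
  have hxS : x ∈ S := Finset.mem_of_mem_erase hx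
  have hrx : r ∈ S.erase x := Finset.mem_erase.2 ⟨fun h => hxr h.symm, hr⟩
  refine ⟨x, hxS, ?_⟩
  have hall : ∀ y ∈ S.erase x, RT G (S.erase x) r y := by
    intro ys hys
    by_contra hny
    obtain ⟨w1, hw1, hw1x, hrtw1⟩ := cross (hconn r hr ys (Finset.mem_of_mem_erase hys))
      (fun h => hxr h.symm) hny
    have hysr : ys ≠ r := fun h => hny (h ▸ RT.refl)
    have hysS : ys ∈ S := Finset.mem_of_mem_erase hys
    -- A ⊆ B and x ∈ B \ A where A, B are reach sets
    set A := reachSet G (S.erase x) r with hA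
    set B := reachSet G (S.erase ys) r with hB
    have hAsub : A ⊆ S.erase ys := by
      intro z hz
      obtain ⟨hzS, hzrt⟩ := mem_reachSet.1 hz
      refine Finset.mem_erase.2 ⟨fun h => hny (h ▸ hzrt), Finset.mem_of_mem_erase hzS⟩
    have hAB : A ⊆ B := by
      intro z hz
      obtain ⟨hzS, hzrt⟩ := mem_reachSet.1 hz
      have := rt_reachSet hzrt
      exact mem_reachSet.2 ⟨hAsub hz, RT.mono (by rw [← hA]; exact hAsub) this⟩
    have hw1A : w1 ∈ A := mem_reachSet.2 ⟨hw1, hrtw1⟩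
    have hxB : x ∈ B := by
      have hxys : x ∈ S.erase ys := Finset.mem_erase.2
        ⟨fun h => (Finset.ne_of_mem_erase hys) h.symm, hxS⟩
      have : RT G (S.erase ys) r w1 := (mem_reachSet.1 (hAB hw1A)).2
      exact mem_reachSet.2 ⟨hxys, this.tail ⟨hAsub hw1A, hxys, hw1x⟩⟩
    have hxA : x ∉ A := fun h => (Finset.notMem_erase x S) (reachSet_subset h)
    have hlt : A.card < B.card := Finset.card_lt_card ⟨hAB, fun h => hxA (h hxB)⟩
    have hle := hmax ys (Finset.mem_erase.2 ⟨hysr, hysS⟩)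
    simp only [← hA, ← hB] at hle
    omega
  intro p hp q hq
  exact ((hall p hp).symm).trans (hall q hq)

/-- initial connected partition into k+1 parts -/
lemma init : ∀ (k : ℕ) (S : Finset V), ConnAll G S → k + 1 ≤ S.card →
    ∃ C : Fin (k + 1) → Finset V, (∀ i, (C i).Nonempty) ∧
      (∀ i j, i ≠ j → Disjoint (C i) (C j)) ∧
      (∀ v ∈ S, ∃ i, v ∈ C i) ∧ (∀ i, C i ⊆ S) ∧ (∀ i, ConnAll G (C i)) := by
  intro k
  induction k with
  | zero =>
      intro S hconn hcard
      have hS : S.Nonempty := Finset.card_pos.1 (by omega)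
      refine ⟨fun _ => S, fun _ => hS,
        fun i j hij => absurd (Fin.ext (by omega)) hij,
        fun v hv => ⟨0, hv⟩, fun _ => Finset.Subset.refl S, fun _ => hconn⟩
  | succ k ih =>
      intro S hconn hcard
      obtain ⟨x, hxS, hconn'⟩ := split hconn (by omega)
      obtain ⟨C, h1, h2, h3, h4, h5⟩ := ih (S.erase x) hconn'
        (by rw [Finset.card_erase_of_mem hxS]; omega)
      refine ⟨Fin.cons {x} C, ?_, ?_, ?_, ?_, ?_⟩
      · intro i
        induction i using Fin.cases with
        | zero => exact Finset.singleton_nonempty x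
        | succ i => exact h1 i
      · intro i j hij
        induction i using Fin.cases with
        | zero =>
            induction j using Fin.cases with
            | zero => exact absurd rfl hij
            | succ j =>
                simp only [Fin.cons_zero, Fin.cons_succ]
                rw [Finset.disjoint_singleton_left]
                exact fun h => Finset.notMem_erase x S (h4 j h)
        | succ i =>
            induction j using Fin.cases with
            | zero =>
                simp only [Fin.cons_zero, Fin.cons_succ]
                rw [Finset.disjoint_singleton_right]
                exact fun h => Finset.notMem_erase x S (h4 i h)
            | succ j =>
                simp only [Fin.cons_succ]
                exact h2 i j (fun h => hij (by rw [h]))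
      · intro v hv
        by_cases hvx : v = x
        · exact ⟨0, by simp [hvx]⟩
        · obtain ⟨i, hi⟩ := h3 v (Finset.mem_erase.2 ⟨hvx, hv⟩)
          exact ⟨i.succ, by simpa using hi⟩
      · intro i
        induction i using Fin.cases with
        | zero => simpa using Finset.singleton_subset_iff.2 hxS
        | succ i => simpa using (h4 i).trans (Finset.erase_subset x S)
      · intro i
        induction i using Fin.cases with
        | zero => simpa using connAll_singleton x
        | succ i => simpa using h5 i

/-- the arithmetic of the improving move -/
lemma sq_move {a b p : ℕ} (hbp : b < p) (hpa : p + 1 ≤ a) :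
    (a - p + b) ^ 2 + p ^ 2 < a ^ 2 + b ^ 2 := by
  obtain ⟨t, ht⟩ : ∃ t, a = p + t := ⟨a - p, by omega⟩
  have ht1 : 1 ≤ t := by omega
  subst ht
  have : p + t - p = t := by omega
  rw [this]
  nlinarith

/-- a connected partition into k parts -/
def GoodPart (G : SimpleGraph V) [DecidableRel G.Adj] (k : ℕ) (C : Fin k → Finset V) : Prop :=
  (∀ i, (C i).Nonempty) ∧ (∀ i j, i ≠ j → Disjoint (C i) (C j)) ∧
  (∀ v : V, ∃ i, v ∈ C i) ∧ (∀ i, ConnAll G (C i))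

def pot (k : ℕ) (C : Fin k → Finset V) : ℕ := ∑ i, (C i).card ^ 2

end CommAux

open CommAux in
theorem comm_main {V : Type*} [Fintype V] [DecidableEq V] (G : SimpleGraph V)
    [DecidableRel G.Adj] (htree : G.IsTree) {k : ℕ} (hk : 2 ≤ k)
    (hcard : k ≤ Fintype.card V) :
    ∃ C : Fin k → Finset V,
      ((∀ i, (C i).Nonempty) ∧
      (∀ i j, i ≠ j → Disjoint (C i) (C j)) ∧
      (∀ v : V, ∃ i, v ∈ C i) ∧
      (∀ i j, i ≠ j → ∀ v ∈ C i,
        (nbrsIn G (C j) v).card * ((C i).card - 1) ≤ (nbrsIn G (C i) v).card * (C j).card)) ∧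
      ∀ i, (G.induce (↑(C i) : Set V)).Connected := by
  classical
  obtain ⟨k', rfl⟩ : ∃ k', k = k' + 1 := ⟨k - 1, by omega⟩
  have hconnuniv : ConnAll G (Finset.univ : Finset V) := by
    intro x _ y _
    exact (htree.isConnected.preconnected x y).elim (fun p => walk_rt p)
  have hex : ∃ C : Fin (k' + 1) → Finset V, GoodPart G (k' + 1) C := by
    obtain ⟨C, h1, h2, h3, h4, h5⟩ := init k' Finset.univ hconnuniv (by simpa using hcard)
    exact ⟨C, h1, h2, fun v => h3 v (Finset.mem_univ v), h5⟩
  set NS : Set ℕ := {n | ∃ C : Fin (k' + 1) → Finset V, GoodPart G (k' + 1) C ∧ pot (k' + 1) C = n}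
    with hNS
  have hNne : NS.Nonempty := ⟨pot (k' + 1) hex.choose, hex.choose, hex.choose_spec, rfl⟩
  obtain ⟨C, hGood, hPhi⟩ := Nat.sInf_mem hNne
  have hmin : ∀ C', GoodPart G (k' + 1) C' → sInf NS ≤ pot (k' + 1) C' :=
    fun C' h => Nat.sInf_le ⟨C', h, rfl⟩
  obtain ⟨hne, hdisj, hcover, hconn⟩ := hGood
  refine ⟨C, ⟨hne, hdisj, hcover, ?_⟩, fun i => conn_of (hne i) (hconn i)⟩
  intro i j hij u hu
  by_contra hfail
  push_neg at hfail
  -- basic facts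
  have huj : u ∉ C j := fun h => (Finset.disjoint_left.1 (hdisj i j hij)) hu h
  have hnbj1 : (nbrsIn G (C j) u).card ≤ 1 := nbrs_le_one htree huj (hconn j)
  have hfail2 : (nbrsIn G (C i) u).card * (C j).card < (C i).card - 1 := by
    have h1 : (nbrsIn G (C j) u).card * ((C i).card - 1) ≤ (C i).card - 1 := by
      calc (nbrsIn G (C j) u).card * ((C i).card - 1) ≤ 1 * ((C i).card - 1) :=
            Nat.mul_le_mul_right _ hnbj1
        _ = (C i).card - 1 := one_mul _
    exact lt_of_lt_of_le hfail h1
  have hnbjpos : 0 < (nbrsIn G (C j) u).card := by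
    rcases Nat.eq_zero_or_pos (nbrsIn G (C j) u).card with h | h
    · rw [h, zero_mul] at hfail
      exact absurd hfail (Nat.not_lt_zero _)
    · exact h
  obtain ⟨v0, hv0⟩ := Finset.card_pos.1 hnbjpos
  have hv0' : v0 ∈ C j ∧ G.Adj u v0 := by
    simpa [nbrsIn, Finset.mem_filter] using hv0
  -- pigeonhole: a big component of (C i).erase u
  have hcardA : ((C i).erase u).card = (C i).card - 1 := Finset.card_erase_of_mem hu
  have herase : nbrsIn G ((C i).erase u) u = nbrsIn G (C i) u := by
    ext z
    simp only [nbrsIn, Finset.mem_filter, Finset.mem_erase]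
    constructor
    · rintro ⟨⟨_, hz⟩, ha⟩; exact ⟨hz, ha⟩
    · rintro ⟨hz, ha⟩; exact ⟨⟨fun h => G.irrefl (h ▸ ha), hz⟩, ha⟩
  have hsub : (C i).erase u ⊆
      (nbrsIn G ((C i).erase u) u).biUnion (fun w => reachSet G ((C i).erase u) w) := by
    intro y hy
    have hyCi : y ∈ C i := Finset.mem_of_mem_erase hy
    have hyu : y ≠ u := Finset.ne_of_mem_erase hy
    obtain ⟨w, hw, hadj, hrt⟩ := firstHit (hconn i y hyCi u hu) hyu
    refine Finset.mem_biUnion.2 ⟨w, ?_, ?_⟩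
    · simp only [nbrsIn, Finset.mem_filter]; exact ⟨hw, hadj.symm⟩
    · exact mem_reachSet.2 ⟨hy, hrt.symm⟩
  have hex_big : ∃ w ∈ nbrsIn G ((C i).erase u) u,
      (C j).card < (reachSet G ((C i).erase u) w).card := by
    by_contra hc
    push_neg at hc
    have h1 : ((C i).erase u).card ≤ (nbrsIn G ((C i).erase u) u).card * (C j).card := by
      calc ((C i).erase u).card
          ≤ ((nbrsIn G ((C i).erase u) u).biUnion
              fun w => reachSet G ((C i).erase u) w).card := Finset.card_le_card hsub
        _ ≤ ∑ w ∈ nbrsIn G ((C i).erase u) u, (reachSet G ((C i).erase u) w).card :=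
            Finset.card_biUnion_le
        _ ≤ (nbrsIn G ((C i).erase u) u).card * (C j).card := by
            have := Finset.sum_le_card_nsmul (nbrsIn G ((C i).erase u) u)
              (fun w => (reachSet G ((C i).erase u) w).card) ((C j).card)
              (fun w hw => hc w hw)
            simpa [smul_eq_mul] using this
    rw [herase, hcardA] at h1
    omega
  obtain ⟨w0, hw0, hKbig⟩ := hex_big
  set K := reachSet G ((C i).erase u) w0 with hKdef
  have hKA : K ⊆ (C i).erase u := reachSet_subset
  have hKsubCi : K ⊆ C i := fun z hz => Finset.mem_of_mem_erase (hKA hz)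
  have hw0A : w0 ∈ (C i).erase u := by
    simp only [nbrsIn, Finset.mem_filter] at hw0; exact hw0.1
  have hw0K : w0 ∈ K := mem_reachSet.2 ⟨hw0A, RT.refl⟩
  have hconnK : ConnAll G K := by
    intro x hx y hy
    obtain ⟨hxA, hxrt⟩ := mem_reachSet.1 hx
    obtain ⟨hyA, hyrt⟩ := mem_reachSet.1 hy
    exact ((rt_reachSet hxrt).symm).trans (rt_reachSet hyrt)
  have huK : u ∉ K := fun h => Finset.notMem_erase u (C i) (hKA h)
  have huCiK : u ∈ C i \ K := Finset.mem_sdiff.2 ⟨hu, huK⟩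
  have hCiKu : ∀ y ∈ C i \ K, RT G (C i \ K) y u := by
    intro y hy
    obtain ⟨hyCi, hyK⟩ := Finset.mem_sdiff.1 hy
    by_cases hyu : y = u
    · subst hyu; exact RT.refl
    · obtain ⟨w, hw, hadj, hrt⟩ := firstHit (hconn i y hyCi u hu) hyu
      have hR := rt_reachSet hrt
      have hRsub : reachSet G ((C i).erase u) y ⊆ C i \ K := by
        intro z hz
        obtain ⟨hzA, hrtz⟩ := mem_reachSet.1 hz
        refine Finset.mem_sdiff.2 ⟨Finset.mem_of_mem_erase hzA, fun hzK => ?_⟩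
        obtain ⟨_, hrtw0z⟩ := mem_reachSet.1 hzK
        exact hyK (mem_reachSet.2 ⟨Finset.mem_erase.2 ⟨hyu, hyCi⟩, hrtw0z.trans hrtz.symm⟩)
      have h1 : RT G (C i \ K) y w := RT.mono hRsub hR
      have hwmem : w ∈ C i \ K := hRsub (mem_reachSet.2 ⟨hw, hrt⟩)
      exact h1.tail ⟨hwmem, huCiK, hadj⟩
  have hconnCiK : ConnAll G (C i \ K) := fun x hx y hy =>
    (hCiKu x hx).trans (hCiKu y hy).symm
  -- the improved partition
  set C' : Fin (k' + 1) → Finset V :=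
    fun l => if l = i then (C i \ K) ∪ C j else if l = j then K else C l with hC'def
  have hC'i : C' i = (C i \ K) ∪ C j := by simp [hC'def]
  have hC'j : C' j = K := by simp [hC'def, Ne.symm hij]
  have hC'other : ∀ l, l ≠ i → l ≠ j → C' l = C l := by
    intro l h1 h2
    simp [hC'def, h1, h2]
  have hgood' : GoodPart G (k' + 1) C' := by
    refine ⟨?_, ?_, ?_, ?_⟩
    · intro l
      by_cases h1 : l = i
      · subst h1; rw [hC'i]; exact ⟨u, Finset.mem_union_left _ huCiK⟩
      by_cases h2 : l = j
      · subst h2; rw [hC'j]; exact ⟨w0, hw0K⟩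
      · rw [hC'other l h1 h2]; exact hne l
    · intro l m hlm
      by_cases hl1 : l = i
      · rw [hl1, hC'i]
        by_cases hm2 : m = j
        · rw [hm2, hC'j]
          exact Finset.disjoint_union_left.2
            ⟨Finset.sdiff_disjoint, (hdisj j i (fun h => hij h.symm)).mono_right hKsubCi⟩
        · have hmi : m ≠ i := fun h => hlm (by rw [hl1, h])
          rw [hC'other m hmi hm2]
          exact Finset.disjoint_union_left.2
            ⟨(hdisj i m (fun h => hmi h.symm)).mono_left Finset.sdiff_subset,
             hdisj j m (fun h => hm2 h.symm)⟩
      by_cases hl2 : l = j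
      · rw [hl2, hC'j]
        by_cases hm1 : m = i
        · rw [hm1, hC'i]
          exact Finset.disjoint_union_right.2
            ⟨Finset.sdiff_disjoint.symm,
             ((hdisj j i (fun h => hij h.symm)).mono_right hKsubCi).symm⟩
        · have hmj : m ≠ j := fun h => hlm (by rw [hl2, h])
          rw [hC'other m hm1 hmj]
          exact (hdisj i m (fun h => hm1 h.symm)).mono_left hKsubCi
      · rw [hC'other l hl1 hl2]
        by_cases hm1 : m = i
        · rw [hm1, hC'i]
          exact Finset.disjoint_union_right.2
            ⟨(hdisj l i hl1).mono_right Finset.sdiff_subset, hdisj l j hl2⟩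
        by_cases hm2 : m = j
        · rw [hm2, hC'j]
          exact (hdisj l i hl1).mono_right hKsubCi
        · rw [hC'other m hm1 hm2]; exact hdisj l m hlm
    · intro v
      obtain ⟨l, hl⟩ := hcover v
      by_cases h1 : l = i
      · rw [h1] at hl
        by_cases hvK : v ∈ K
        · exact ⟨j, by rw [hC'j]; exact hvK⟩
        · exact ⟨i, by rw [hC'i]; exact Finset.mem_union_left _ (Finset.mem_sdiff.2 ⟨hl, hvK⟩)⟩
      by_cases h2 : l = j
      · rw [h2] at hl
        exact ⟨i, by rw [hC'i]; exact Finset.mem_union_right _ hl⟩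
      · exact ⟨l, by rw [hC'other l h1 h2]; exact hl⟩
    · intro l
      by_cases h1 : l = i
      · rw [h1, hC'i]
        exact connAll_union hconnCiK (hconn j) huCiK hv0'.1 hv0'.2
      by_cases h2 : l = j
      · rw [h2, hC'j]; exact hconnK
      · rw [hC'other l h1 h2]; exact hconn l
  -- potential decreases
  have hKa : K.card + 1 ≤ (C i).card := by
    have h1 := Finset.card_le_card hKA
    rw [hcardA] at h1
    have hci1 : 1 ≤ (C i).card := Finset.card_pos.2 ⟨u, hu⟩
    omega
  have hlt : pot (k' + 1) C' < pot (k' + 1) C := by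
    have hsplit : ∀ D : Fin (k' + 1) → Finset V,
        pot (k' + 1) D = (∑ l ∈ Finset.univ \ {i, j}, (D l).card ^ 2)
          + ((D i).card ^ 2 + (D j).card ^ 2) := by
      intro D
      rw [pot, ← Finset.sum_sdiff (Finset.subset_univ ({i, j} : Finset (Fin (k' + 1)))),
        Finset.sum_pair hij]
    rw [hsplit C', hsplit C]
    have hsame : ∑ l ∈ Finset.univ \ ({i, j} : Finset (Fin (k' + 1))), (C' l).card ^ 2
        = ∑ l ∈ Finset.univ \ ({i, j} : Finset (Fin (k' + 1))), (C l).card ^ 2 := by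
      refine Finset.sum_congr rfl fun l hl => ?_
      rw [Finset.mem_sdiff, Finset.mem_insert, Finset.mem_singleton] at hl
      push_neg at hl
      rw [hC'other l hl.2.1 hl.2.2]
    rw [hsame]
    have hdisjCiKCj : Disjoint (C i \ K) (C j) := (hdisj i j hij).mono_left Finset.sdiff_subset
    have hcardi' : (C' i).card = ((C i).card - K.card) + (C j).card := by
      rw [hC'i, Finset.card_union_of_disjoint hdisjCiKCj, Finset.card_sdiff_of_subset hKsubCi]
    have hcardj' : (C' j).card = K.card := by rw [hC'j]
    rw [hcardi', hcardj']
    exact Nat.add_lt_add_left (sq_move hKbig hKa) _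
  have hcontr := hmin C' hgood'
  omega


/-- Every tree with at least `k` vertices admits a connected generalized `k`-community
structure. -/
theorem stmt_13 {V : Type*} [Fintype V] [DecidableEq V] (G : SimpleGraph V)
    [DecidableRel G.Adj] (htree : G.IsTree) {k : ℕ} (hk : 2 ≤ k)
    (hcard : k ≤ Fintype.card V) :
    ∃ C : Fin k → Finset V, IsGenKComm G C ∧
      ∀ i, (G.induce (↑(C i) : Set V)).Connected := by
  obtain ⟨C, h, hc⟩ := comm_main G htree hk hcard
  exact ⟨C, ⟨h.1, h.2.1, h.2.2.1, h.2.2.2⟩, hc⟩
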